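/- Let h ∈ C²([0,∞)) be positive and decreasing with h(t) = (1/2)exp(−λ(√t − √(2z₀))) for t ≥ 2z₀ and h(t)=1 for t ≤ z₀, where λ > 0 and z₀ > 0 is chosen so that H(x) ≥ z₀ implies H(x) ≥ a₁|x|². Define γ^∨(x) = h(H(x)). Then there exists a constant c > 0 such that Δγ^∨(x) ≤ c γ^∨(x) for all x ∈ ℝ². -/

import Mathlib

open MeasureTheory
open Filter Topology

/-- Auxiliary: the explicit exponential profile. -/
noncomputable def phiA (lam s₀ : ℝ) (u : ℝ) : ℝ :=
  (1/2) * Real.exp (-(lam * (Real.sqrt u - s₀)))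

/-- Auxiliary: its first derivative (for `u > 0`). -/
noncomputable def p1A (lam s₀ : ℝ) (u : ℝ) : ℝ :=
  -(lam/(2*Real.sqrt u)) * phiA lam s₀ u

/-- Auxiliary: its second derivative (for `u > 0`). -/
noncomputable def p2A (lam s₀ : ℝ) (u : ℝ) : ℝ :=
  (lam/4) * (lam/u + 1/(u*Real.sqrt u)) * phiA lam s₀ u

lemma phiA_pos (lam s₀ u : ℝ) : 0 < phiA lam s₀ u := by
  unfold phiA; positivity

lemma hasDerivAt_phiA (lam s₀ t : ℝ) (ht : 0 < t) :
    HasDerivAt (phiA lam s₀) (p1A lam s₀ t) t := by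
  have hsq : HasDerivAt Real.sqrt (1/(2*Real.sqrt t)) t := Real.hasDerivAt_sqrt ht.ne'
  have h1 : HasDerivAt (fun u => -(lam * (Real.sqrt u - s₀)))
      (-(lam * (1/(2*Real.sqrt t)))) t := ((hsq.sub_const _).const_mul lam).neg
  have h2 := (h1.exp).const_mul (1/2 : ℝ)
  exact h2.congr_deriv (by unfold p1A phiA; ring)

lemma hasDerivAt_p1A (lam s₀ t : ℝ) (ht : 0 < t) :
    HasDerivAt (p1A lam s₀) (p2A lam s₀ t) t := by
  have hs : Real.sqrt t ≠ 0 := (Real.sqrt_pos.mpr ht).ne'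
  have hss : Real.sqrt t * Real.sqrt t = t := Real.mul_self_sqrt ht.le
  have hsq : HasDerivAt Real.sqrt (1/(2*Real.sqrt t)) t := Real.hasDerivAt_sqrt ht.ne'
  have hinv : HasDerivAt (fun u => (Real.sqrt u)⁻¹) (-(1/(2*Real.sqrt t)) / (Real.sqrt t)^2) t :=
    hsq.inv hs
  have hmain : HasDerivAt (fun u => (-(lam)/2) * ((Real.sqrt u)⁻¹ * phiA lam s₀ u))
      ((-(lam)/2) * ((-(1/(2*Real.sqrt t)) / (Real.sqrt t)^2) * phiA lam s₀ t
        + (Real.sqrt t)⁻¹ * (p1A lam s₀ t))) t :=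
    (hinv.mul (hasDerivAt_phiA lam s₀ t ht)).const_mul _
  have hfe : p1A lam s₀ = (fun u => (-(lam)/2) * ((Real.sqrt u)⁻¹ * phiA lam s₀ u)) := by
    funext u; unfold p1A; ring
  rw [hfe]
  have key : ∀ E : ℝ, (lam/4) * (lam/t + 1/(t*Real.sqrt t)) * E
      = (-(lam)/2) * ((-(1/(2*Real.sqrt t)) / (Real.sqrt t)^2) * E
        + (Real.sqrt t)⁻¹ * (-(lam/(2*Real.sqrt t)) * E)) := by
    intro E
    set s := Real.sqrt t with hsd
    rw [← hss]
    field_simp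
    ring
  convert hmain using 1
  unfold p2A p1A
  exact key (phiA lam s₀ t)

/-- The Laplacian of `f : ℝ² → ℝ`, as the trace of the second derivative. -/
noncomputable def lapE (f : EuclideanSpace ℝ (Fin 2) → ℝ) (x : EuclideanSpace ℝ (Fin 2)) : ℝ :=
  ∑ i : Fin 2,
    iteratedFDeriv ℝ 2 f x ![EuclideanSpace.single i 1, EuclideanSpace.single i 1]

set_option maxHeartbeats 1600000

/-- for `h ∈ C²([0,∞))` positive decreasing, equal to `1` on `(-∞, z₀]` and
to `(1/2)exp(−λ(√t − √(2z₀)))` on `[2z₀,∞)`, and `γ^∨ = h ∘ H`, there is `c > 0` with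
`Δγ^∨ ≤ c γ^∨` everywhere. -/
theorem stmt_5
    (H : EuclideanSpace ℝ (Fin 2) → ℝ) (hH : ContDiff ℝ 4 H)
    (C a₁ z₀ lam : ℝ) (hC : 0 < C) (ha₁ : 0 < a₁) (hz₀ : 0 < z₀) (hlam : 0 < lam)
    (hHnn : ∀ x, 0 ≤ H x)
    (hgrad : ∀ x, ‖fderiv ℝ H x‖ ≤ C * ‖x‖)
    (hlapH : ∀ x, |lapE H x| ≤ C)
    (hquad : ∀ x, z₀ ≤ H x → a₁ * ‖x‖^2 ≤ H x)
    (h : ℝ → ℝ) (hh : ContDiffOn ℝ 2 h (Set.Ici 0))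
    (hpos : ∀ t, 0 ≤ t → 0 < h t) (hdec : AntitoneOn h (Set.Ici 0))
    (hform : ∀ t, 2 * z₀ ≤ t →
      h t = (1/2) * Real.exp (-(lam * (Real.sqrt t - Real.sqrt (2 * z₀)))))
    (hone : ∀ t, t ≤ z₀ → h t = 1) :
    ∃ c > 0, ∀ x, lapE (fun y => h (H y)) x ≤ c * h (H x) := by
  classical
  set s2 := Real.sqrt (2*z₀) with hs2def
  have hs2 : 0 < s2 := Real.sqrt_pos.mpr (by linarith)
  have hform' : ∀ t, 2 * z₀ ≤ t → h t = phiA lam s2 t := by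
    intro t ht; rw [hform t ht]; rfl
  -- smoothness facts for H
  have hHc : Continuous H := hH.continuous
  have hHd : ∀ y, DifferentiableAt ℝ H y :=
    fun y => (hH.differentiable (by norm_num)).differentiableAt
  have hH1 : ContDiff ℝ 3 (fderiv ℝ H) := hH.fderiv_right (by norm_num)
  have hBd : ∀ y, DifferentiableAt ℝ (fderiv ℝ H) y :=
    fun y => (hH1.differentiable (by norm_num)).differentiableAt
  -- global C² regularity of h ∘ H
  have hfC : ContDiff ℝ 2 (fun y => h (H y)) := by
    rw [← contDiffOn_univ]
    exact hh.comp ((hH.of_le (by norm_num)).contDiffOn) (fun y _ => hHnn y)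
  -- compact-region bound
  set R := Real.sqrt (3*z₀/a₁) with hRdef
  have hcont : Continuous fun y => ‖iteratedFDeriv ℝ 2 (fun y => h (H y)) y‖ :=
    (hfC.continuous_iteratedFDeriv (le_refl 2)).norm
  obtain ⟨x₀, -, hx₀⟩ := (isCompact_closedBall (0:EuclideanSpace ℝ (Fin 2)) R).exists_isMaxOn
    ⟨0, Metric.mem_closedBall_self (Real.sqrt_nonneg _)⟩ hcont.continuousOn
  set M := 2 * ‖iteratedFDeriv ℝ 2 (fun y => h (H y)) x₀‖ with hMdef
  have hM0 : 0 ≤ M := by positivity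
  have hball : ∀ y, ‖y‖ ≤ R → lapE (fun y => h (H y)) y ≤ M := by
    intro y hy
    have hmem : y ∈ Metric.closedBall (0:EuclideanSpace ℝ (Fin 2)) R := by
      simpa [Metric.mem_closedBall, dist_eq_norm] using hy
    have hterm : ∀ i : Fin 2,
        iteratedFDeriv ℝ 2 (fun y => h (H y)) y
            ![EuclideanSpace.single i 1, EuclideanSpace.single i 1]
          ≤ ‖iteratedFDeriv ℝ 2 (fun y => h (H y)) y‖ := by
      intro i
      have h1 := (iteratedFDeriv ℝ 2 (fun y => h (H y)) y).le_opNorm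
        ![EuclideanSpace.single i 1, EuclideanSpace.single i 1]
      have h2 : ∏ j, ‖(![EuclideanSpace.single i (1:ℝ), EuclideanSpace.single i 1]) j‖ = 1 := by
        simp [Fin.prod_univ_two, EuclideanSpace.norm_single]
      rw [h2, mul_one] at h1
      exact le_trans (le_abs_self _) h1
    have hmax : ‖iteratedFDeriv ℝ 2 (fun y => h (H y)) y‖
        ≤ ‖iteratedFDeriv ℝ 2 (fun y => h (H y)) x₀‖ := hx₀ hmem
    calc lapE (fun y => h (H y)) y
        ≤ ∑ _i : Fin 2, ‖iteratedFDeriv ℝ 2 (fun y => h (H y)) y‖ :=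
          Finset.sum_le_sum (fun i _ => hterm i)
      _ = 2 * ‖iteratedFDeriv ℝ 2 (fun y => h (H y)) y‖ := by
          rw [Fin.sum_univ_two]; ring
      _ ≤ M := by rw [hMdef]; linarith
  -- constants
  have h3z : (0:ℝ) ≤ 3*z₀ := by linarith
  have h3pos : 0 < h (3*z₀) := hpos _ h3z
  set c₂ := M / h (3*z₀) with hc₂def
  have hc₂0 : 0 ≤ c₂ := div_nonneg hM0 h3pos.le
  set c₃ := lam * C / (2*s2) + (lam * C^2/(2*a₁)) * (lam + 1/s2) with hc₃def
  have hc₃0 : 0 ≤ c₃ := by positivity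
  refine ⟨1 + c₂ + c₃, by positivity, fun x => ?_⟩
  have hhx : 0 < h (H x) := hpos _ (hHnn x)
  rcases lt_or_ge (H x) z₀ with hc1 | hge
  · -- region where h ∘ H is locally constant 1
    have hUo : IsOpen {y | H y < z₀} := isOpen_lt hHc continuous_const
    have hfz : fderiv ℝ (fun y => h (H y)) =ᶠ[𝓝 x] (fun _ => 0) := by
      filter_upwards [hUo.mem_nhds hc1] with y hy
      have hev : (fun y => h (H y)) =ᶠ[𝓝 y] (fun _ => (1:ℝ)) := by
        filter_upwards [hUo.mem_nhds hy] with z hz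
        simpa using hone _ (le_of_lt hz)
      rw [hev.fderiv_eq]
      exact fderiv_const_apply 1
    have hD2 : fderiv ℝ (fderiv ℝ (fun y => h (H y))) x = 0 := by
      rw [hfz.fderiv_eq]
      exact fderiv_const_apply 0
    have hz : lapE (fun y => h (H y)) x = 0 := by
      unfold lapE
      refine Finset.sum_eq_zero fun i _ => ?_
      rw [iteratedFDeriv_two_apply, hD2]
      simp
    rw [hz]
    positivity
  rcases le_or_gt (H x) (3*z₀) with hc2 | hc3
  · -- intermediate compact region
    have hxR : ‖x‖ ≤ R := by
      have h1 : a₁ * ‖x‖^2 ≤ 3*z₀ := le_trans (hquad x hge) hc2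
      rw [hRdef]
      rw [Real.le_sqrt (norm_nonneg x) (by positivity)]
      rw [le_div_iff₀ ha₁]
      linarith [h1]
    have h1 : lapE (fun y => h (H y)) x ≤ M := hball x hxR
    have h2 : h (3*z₀) ≤ h (H x) := hdec (hHnn x) h3z hc2
    have h3 : M = c₂ * h (3*z₀) := by
      rw [hc₂def]; field_simp
    calc lapE (fun y => h (H y)) x ≤ M := h1
      _ = c₂ * h (3*z₀) := h3
      _ ≤ c₂ * h (H x) := by nlinarith
      _ ≤ (1 + c₂ + c₃) * h (H x) := by nlinarith
  · -- exponential region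
    have ht0 : 0 < H x := by linarith
    have ht2 : 2*z₀ ≤ H x := by linarith
    have hs0 : 0 < Real.sqrt (H x) := Real.sqrt_pos.mpr ht0
    have hss : Real.sqrt (H x) * Real.sqrt (H x) = H x := Real.mul_self_sqrt ht0.le
    have hs2s : s2 ≤ Real.sqrt (H x) := by
      rw [hs2def]; exact Real.sqrt_le_sqrt ht2
    have hUo : IsOpen {y | 2*z₀ < H y} := isOpen_lt continuous_const hHc
    have hxU : x ∈ {y | 2*z₀ < H y} := by simp only [Set.mem_setOf_eq]; linarith
    have hfA : ∀ y ∈ {y | 2*z₀ < H y},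
        fderiv ℝ (fun y => h (H y)) y = p1A lam s2 (H y) • fderiv ℝ H y := by
      intro y hy
      have hy' : (0:ℝ) < H y := lt_of_le_of_lt (by linarith) hy
      have hyev : (fun y => h (H y)) =ᶠ[𝓝 y] (fun z => phiA lam s2 (H z)) := by
        filter_upwards [hUo.mem_nhds hy] with z hz
        simpa using hform' _ (le_of_lt hz)
      rw [hyev.fderiv_eq]
      exact ((hasDerivAt_phiA lam s2 _ hy').comp_hasFDerivAt y (hHd y).hasFDerivAt).fderiv
    have hev2 : fderiv ℝ (fun y => h (H y)) =ᶠ[𝓝 x]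
        (fun y => p1A lam s2 (H y) • fderiv ℝ H y) := by
      filter_upwards [hUo.mem_nhds hxU] with y hy using hfA y hy
    have hp1H : HasFDerivAt (fun y => p1A lam s2 (H y)) (p2A lam s2 (H x) • fderiv ℝ H x) x :=
      (hasDerivAt_p1A lam s2 _ ht0).comp_hasFDerivAt x (hHd x).hasFDerivAt
    have hA : fderiv ℝ (fun y => p1A lam s2 (H y) • fderiv ℝ H y) x
        = p1A lam s2 (H x) • fderiv ℝ (fderiv ℝ H) x
          + (p2A lam s2 (H x) • fderiv ℝ H x).smulRight (fderiv ℝ H x) :=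
      (hp1H.smul (hBd x).hasFDerivAt).fderiv
    have hD2 : fderiv ℝ (fderiv ℝ (fun y => h (H y))) x
        = fderiv ℝ (fun y => p1A lam s2 (H y) • fderiv ℝ H y) x := hev2.fderiv_eq
    have happ : ∀ v : EuclideanSpace ℝ (Fin 2),
        fderiv ℝ (fderiv ℝ (fun y => h (H y))) x v v
          = p1A lam s2 (H x) * (fderiv ℝ (fderiv ℝ H) x v v)
            + p2A lam s2 (H x) * (fderiv ℝ H x v * fderiv ℝ H x v) := by
      intro v
      rw [hD2, hA]
      simp only [ContinuousLinearMap.add_apply, ContinuousLinearMap.smul_apply,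
        ContinuousLinearMap.smulRight_apply, smul_eq_mul]
      ring
    have hkey : lapE (fun y => h (H y)) x = p1A lam s2 (H x) * lapE H x
        + p2A lam s2 (H x) * ∑ i : Fin 2, (fderiv ℝ H x (EuclideanSpace.single i 1))^2 := by
      unfold lapE
      simp only [iteratedFDeriv_two_apply, Matrix.cons_val_zero, Matrix.cons_val_one,
        Matrix.head_cons, Fin.sum_univ_two, happ]
      ring
    -- estimates
    have hDi : ∀ i : Fin 2, |fderiv ℝ H x (EuclideanSpace.single i 1)| ≤ C * ‖x‖ := by
      intro i
      have h1 := (fderiv ℝ H x).le_opNorm (EuclideanSpace.single i (1:ℝ))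
      have h2 : ‖EuclideanSpace.single i (1:ℝ)‖ = 1 := by
        simp [EuclideanSpace.norm_single]
      rw [h2, mul_one] at h1
      exact le_trans h1 (hgrad x)
    have hsum : ∑ i : Fin 2, (fderiv ℝ H x (EuclideanSpace.single i 1))^2
        ≤ 2 * C^2 * (H x/a₁) := by
      have hxt : ‖x‖^2 ≤ H x/a₁ := by
        rw [le_div_iff₀ ha₁]; nlinarith [hquad x (by linarith : z₀ ≤ H x)]
      have h1 : ∀ i : Fin 2, (fderiv ℝ H x (EuclideanSpace.single i 1))^2 ≤ (C*‖x‖)^2 := by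
        intro i
        have := hDi i
        nlinarith [abs_nonneg (fderiv ℝ H x (EuclideanSpace.single i 1)),
          sq_abs (fderiv ℝ H x (EuclideanSpace.single i 1))]
      calc ∑ i : Fin 2, (fderiv ℝ H x (EuclideanSpace.single i 1))^2
          ≤ ∑ _i : Fin 2, (C*‖x‖)^2 := Finset.sum_le_sum (fun i _ => h1 i)
        _ = 2 * (C^2 * ‖x‖^2) := by rw [Fin.sum_univ_two]; ring
        _ ≤ 2 * C^2 * (H x/a₁) := by nlinarith
    have hφt : 0 < phiA lam s2 (H x) := phiA_pos _ _ _
    have hterm1 : p1A lam s2 (H x) * lapE H x ≤ lam * C / (2*s2) * phiA lam s2 (H x) := by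
      have hL := abs_le.mp (hlapH x)
      have e1 : p1A lam s2 (H x) = -((lam/(2*Real.sqrt (H x))) * phiA lam s2 (H x)) := by
        unfold p1A; ring
      have ha : 0 ≤ (lam/(2*Real.sqrt (H x))) * phiA lam s2 (H x) := by positivity
      have step1 : p1A lam s2 (H x) * lapE H x
          ≤ (lam/(2*Real.sqrt (H x))) * phiA lam s2 (H x) * C := by
        rw [e1]
        nlinarith [mul_nonneg ha (by linarith [hL.1] : (0:ℝ) ≤ C + lapE H x)]
      have step2 : (lam/(2*Real.sqrt (H x))) * phiA lam s2 (H x) * C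
          ≤ lam * C / (2*s2) * phiA lam s2 (H x) := by
        have h1 : lam/(2*Real.sqrt (H x)) ≤ lam/(2*s2) := by
          apply div_le_div_of_nonneg_left hlam.le (by linarith) (by linarith)
        calc (lam/(2*Real.sqrt (H x))) * phiA lam s2 (H x) * C
            ≤ (lam/(2*s2)) * phiA lam s2 (H x) * C :=
              mul_le_mul_of_nonneg_right (mul_le_mul_of_nonneg_right h1 hφt.le) hC.le
          _ = lam * C / (2*s2) * phiA lam s2 (H x) := by ring
      linarith
    have hterm2 : p2A lam s2 (H x) * ∑ i : Fin 2, (fderiv ℝ H x (EuclideanSpace.single i 1))^2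
        ≤ (lam * C^2/(2*a₁)) * (lam + 1/s2) * phiA lam s2 (H x) := by
      have hp2nn : 0 ≤ p2A lam s2 (H x) := by
        unfold p2A
        have h0 : 0 ≤ lam/(H x) + 1/((H x)*Real.sqrt (H x)) := by positivity
        positivity
      have step1 : p2A lam s2 (H x) * ∑ i : Fin 2, (fderiv ℝ H x (EuclideanSpace.single i 1))^2
          ≤ p2A lam s2 (H x) * (2 * C^2 * (H x/a₁)) := mul_le_mul_of_nonneg_left hsum hp2nn
      have step2 : p2A lam s2 (H x) * (2 * C^2 * (H x/a₁))
          = (lam * C^2/(2*a₁)) * (lam + 1/Real.sqrt (H x)) * phiA lam s2 (H x) := by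
        unfold p2A
        rw [← hss]
        field_simp
        ring
      have step3 : (lam * C^2/(2*a₁)) * (lam + 1/Real.sqrt (H x)) * phiA lam s2 (H x)
          ≤ (lam * C^2/(2*a₁)) * (lam + 1/s2) * phiA lam s2 (H x) := by
        have h1 : 1/Real.sqrt (H x) ≤ 1/s2 := one_div_le_one_div_of_le hs2 hs2s
        have h2 : (0:ℝ) ≤ lam * C^2/(2*a₁) := by positivity
        exact mul_le_mul_of_nonneg_right
          (mul_le_mul_of_nonneg_left (by linarith) h2) hφt.le
      linarith [step1, step2.le, step2.ge, step3]
    have hφh : phiA lam s2 (H x) = h (H x) := (hform' _ ht2).symm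
    rw [hkey]
    calc p1A lam s2 (H x) * lapE H x
          + p2A lam s2 (H x) * ∑ i : Fin 2, (fderiv ℝ H x (EuclideanSpace.single i 1))^2
        ≤ lam * C / (2*s2) * phiA lam s2 (H x)
          + (lam * C^2/(2*a₁)) * (lam + 1/s2) * phiA lam s2 (H x) :=
          add_le_add hterm1 hterm2
      _ = c₃ * phiA lam s2 (H x) := by rw [hc₃def]; ring
      _ = c₃ * h (H x) := by rw [hφh]
      _ ≤ (1 + c₂ + c₃) * h (H x) := by nlinarith
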